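/- Let j_δ be a standard even mollifier and H a Hilbert space. Let u, v ∈ L^∞(0,T;H) be weakly continuous in time with weak limits u(0), u(T), v(0), v(T). With the constant extensions outside [0,T] and mollifications u_δ, v_δ, one has lim_{δ→0} ∫₀ᵀ (u, d/dt v_δ) + (d/dt u_δ, v) dτ = (u(T), v(T)) − (u(0), v(0)). -/

import Mathlib

open MeasureTheory Filter intervalIntegral RealInnerProductSpace Topology
open scoped Convolution

/-- The constant-in-time extension of `u : ℝ → H` outside `[0,T]`. -/
noncomputable def extendT {H : Type*} (T : ℝ) (u : ℝ → H) : ℝ → H :=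
  fun t => u (max 0 (min t T))

/-- The rescaled mollifier `j_δ(t) = δ⁻¹ j(t/δ)`. -/
noncomputable def mollK (j : ℝ → ℝ) (δ t : ℝ) : ℝ := δ⁻¹ * j (t / δ)

/-- Mollification in time of the constant extension of `u`. -/
noncomputable def mollT {H : Type*} [NormedAddCommGroup H] [NormedSpace ℝ H]
    (T : ℝ) (j : ℝ → ℝ) (u : ℝ → H) (δ t : ℝ) : H :=
  ∫ s : ℝ, mollK j δ (t - s) • extendT T u s

set_option linter.unusedSectionVars false
set_option linter.unusedVariables false
set_option maxHeartbeats 1000000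

lemma stronglyMeasurable_of_weakCont {H : Type*} [NormedAddCommGroup H]
    [InnerProductSpace ℝ H] [CompleteSpace H]
    {f : ℝ → H} (hf : ∀ φ : H, Continuous fun t => ⟪f t, φ⟫) :
    StronglyMeasurable f := by
  classical
  set e : ℕ → ℚ := fun n => (Denumerable.eqv ℚ).symm n with he
  have he_surj : Function.Surjective e := (Denumerable.eqv ℚ).symm.surjective
  set φ : ℕ → H := fun k => f (e k) with hφ
  set M : Submodule ℝ H := (Submodule.span ℝ (Set.range φ)).topologicalClosure with hM
  haveI : CompleteSpace M :=
    (Submodule.isClosed_topologicalClosure _).completeSpace_coe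
  -- every value of f lies in M
  have hfM : ∀ t, f t ∈ M := by
    intro t
    have hq : ∀ q : ℚ, f q ∈ M := by
      intro q
      obtain ⟨k, hk⟩ := he_surj q
      have : φ k ∈ Submodule.span ℝ (Set.range φ) :=
        Submodule.subset_span ⟨k, rfl⟩
      have := (Submodule.span ℝ (Set.range φ)).le_topologicalClosure this
      simpa [hφ, hk] using this
    set w : H := f t - (M.orthogonalProjectionOnto (f t) : H) with hw
    have hwperp : w ∈ Mᗮ := Submodule.sub_starProjection_mem_orthogonal (K := M) (f t)
    have hzero : ∀ x ∈ M, ⟪x, w⟫ = 0 := fun x hx => hwperp x hx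
    have hcont : Continuous fun s : ℝ => ⟪f s, w⟫ := hf w
    have hdense : DenseRange ((↑) : ℚ → ℝ) := Rat.denseRange_cast
    have hzero_t : ⟪f t, w⟫ = 0 := by
      have : (fun s : ℝ => ⟪f s, w⟫) = fun _ => (0 : ℝ) := by
        apply Continuous.ext_on hdense hcont continuous_const
        rintro x ⟨q, rfl⟩
        exact hzero _ (hq q)
      exact congrFun this t
    have hproj : ⟪(M.orthogonalProjectionOnto (f t) : H), w⟫ = 0 :=
      hzero _ (M.orthogonalProjectionOnto (f t)).2
    have : ⟪w, w⟫ = 0 := by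
      rw [hw, inner_sub_left, hzero_t, hproj, sub_zero]
    have hw0 : w = 0 := by rwa [inner_self_eq_zero] at this
    have : f t = (M.orthogonalProjectionOnto (f t) : H) := by
      have := sub_eq_zero.mp hw0; exact this
    rw [this]; exact (M.orthogonalProjectionOnto (f t)).2
  -- finite-dimensional approximating subspaces
  set V : ℕ → Submodule ℝ H := fun n => Submodule.span ℝ (φ '' Set.Iic n) with hV
  haveI : ∀ n, FiniteDimensional ℝ (V n) := fun n =>
    FiniteDimensional.span_of_finite ℝ ((Set.finite_Iic n).image φ)
  set g : ℕ → ℝ → H := fun n t => ((V n).orthogonalProjectionOnto (f t) : H) with hg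
  have hg_cont : ∀ n, Continuous (g n) := by
    intro n
    set b := stdOrthonormalBasis ℝ (V n) with hb
    have hrepr : ∀ x : H, ((V n).orthogonalProjectionOnto x : H)
        = ∑ i, ⟪(b i : H), x⟫ • (b i : H) := by
      intro x
      have := b.orthogonalProjectionOnto_apply_eq_sum x
      calc ((V n).orthogonalProjectionOnto x : H)
          = ((∑ i, ⟪(b i : H), x⟫ • b i : V n) : H) := by rw [this]
        _ = ∑ i, ⟪(b i : H), x⟫ • (b i : H) := by push_cast; rfl
    simp only [hg, hrepr]
    refine continuous_finset_sum _ fun i _ => ?_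
    have : Continuous fun t => ⟪f t, (b i : H)⟫ := hf _
    have : Continuous fun t => ⟪(b i : H), f t⟫ := by
      simpa [real_inner_comm] using this
    exact this.smul continuous_const
  have hg_meas : ∀ n, StronglyMeasurable (g n) := fun n =>
    (hg_cont n).stronglyMeasurable
  have hlim : ∀ t, Tendsto (fun n => g n t) atTop (𝓝 (f t)) := by
    intro t
    rw [NormedAddCommGroup.tendsto_atTop]
    intro ε hε
    have : f t ∈ closure ((Submodule.span ℝ (Set.range φ) : Submodule ℝ H) : Set H) := hfM t
    obtain ⟨y, hy_mem, hy⟩ := Metric.mem_closure_iff.mp this ε hε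
    obtain ⟨T, hTsub, hyT⟩ := Submodule.mem_span_finite_of_mem_span hy_mem
    obtain ⟨N, hTN⟩ : ∃ N : ℕ, (T : Set H) ⊆ φ '' Set.Iic N := by
      have h : ∀ x : T, ∃ k, φ k = x := fun x => hTsub x.2
      choose κ hκ using h
      refine ⟨Finset.univ.sup fun x : T => κ x, ?_⟩
      rintro x hx
      exact ⟨κ ⟨x, hx⟩, Set.mem_Iic.2 (Finset.le_sup (Finset.mem_univ _)), hκ ⟨x, hx⟩⟩
    refine ⟨N, fun n hn => ?_⟩
    have hyVn : y ∈ V n := by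
      refine Submodule.span_mono ?_ hyT
      exact hTN.trans (Set.image_mono (Set.Iic_subset_Iic.2 hn))
    have hmin : ‖f t - g n t‖ ≤ ‖f t - y‖ := by
      rw [hg]; change ‖f t - (V n).starProjection (f t)‖ ≤ _; rw [Submodule.starProjection_minimal]
      exact ciInf_le ⟨0, fun r ⟨x, hx⟩ => hx ▸ norm_nonneg _⟩ (⟨y, hyVn⟩ : V n)
    calc ‖g n t - f t‖ = ‖f t - g n t‖ := by rw [norm_sub_rev]
      _ ≤ ‖f t - y‖ := hmin
      _ = dist (f t) y := (dist_eq_norm _ _).symm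
      _ < ε := hy
  exact stronglyMeasurable_of_tendsto atTop hg_meas (tendsto_pi_nhds.2 hlim)


section ext
variable {H : Type*} {T : ℝ} {u : ℝ → H}

lemma extendT_eq_left (hT : 0 ≤ T) {s : ℝ} (hs : s ≤ 0) : extendT T u s = u 0 := by
  unfold extendT
  rw [min_eq_left (hs.trans hT), max_eq_left hs]

lemma extendT_eq_right (hT : 0 ≤ T) {s : ℝ} (hs : T ≤ s) : extendT T u s = u T := by
  unfold extendT
  rw [min_eq_right hs, max_eq_right hT]

lemma extendT_eq_self {s : ℝ} (h0 : 0 ≤ s) (hs : s ≤ T) : extendT T u s = u s := by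
  unfold extendT
  rw [min_eq_left hs, max_eq_right h0]

end ext


section kernel
variable {j : ℝ → ℝ} {δ : ℝ}

lemma mollK_contDiff (hj : ContDiff ℝ (⊤ : ℕ∞) j) :
    ContDiff ℝ (⊤ : ℕ∞) (mollK j δ) := by
  unfold mollK
  exact contDiff_const.mul (hj.comp (contDiff_id.div_const δ))

lemma mollK_support (hj_supp : Function.support j ⊆ Set.Ioo (-1 : ℝ) 1) (hδ : 0 < δ) :
    Function.support (mollK j δ) ⊆ Set.Ioo (-δ) δ := by
  intro t ht
  have hj : j (t / δ) ≠ 0 := by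
    intro h; apply ht; unfold mollK; rw [h, mul_zero]
  have := hj_supp hj
  have h1 : -1 < t / δ := this.1
  have h2 : t / δ < 1 := this.2
  constructor
  · nlinarith [mul_lt_mul_of_pos_right h1 hδ, mul_lt_mul_of_pos_right h2 hδ,
      div_mul_cancel₀ t (ne_of_gt hδ)]
  · nlinarith [mul_lt_mul_of_pos_right h2 hδ, div_mul_cancel₀ t (ne_of_gt hδ)]

lemma mollK_hcs (hj_supp : Function.support j ⊆ Set.Ioo (-1 : ℝ) 1) (hδ : 0 < δ) :
    HasCompactSupport (mollK j δ) := by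
  apply HasCompactSupport.intro (isCompact_Icc (a := -δ) (b := δ))
  intro x hx
  by_contra h
  exact hx (Set.Ioo_subset_Icc_self (mollK_support hj_supp hδ h))

lemma mollK_even (hj_even : ∀ t, j (-t) = j t) (t : ℝ) :
    mollK j δ (-t) = mollK j δ t := by
  unfold mollK; rw [neg_div, hj_even]

lemma mollK_deriv_odd (hj : ContDiff ℝ (⊤ : ℕ∞) j) (hj_even : ∀ t, j (-t) = j t) (t : ℝ) :
    deriv (mollK j δ) (-t) = -deriv (mollK j δ) t := by
  have h1 : deriv (fun x => mollK j δ (-x)) t = -deriv (mollK j δ) (-t) :=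
    deriv_comp_neg (f := mollK j δ) (x := t)
  have h2 : (fun x => mollK j δ (-x)) = mollK j δ :=
    funext fun x => mollK_even hj_even x
  rw [h2] at h1
  linarith [h1]

lemma mollK_integral (hδ : 0 < δ) (hj_int : (∫ t : ℝ, j t) = 1) :
    (∫ t : ℝ, mollK j δ t) = 1 := by
  unfold mollK
  rw [MeasureTheory.integral_const_mul, MeasureTheory.Measure.integral_comp_div j δ,
    hj_int, abs_of_pos hδ]
  simp [ne_of_gt hδ]

lemma mollK_integral_Ioi (hj : ContDiff ℝ (⊤ : ℕ∞) j)
    (hj_even : ∀ t, j (-t) = j t)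
    (hj_supp : Function.support j ⊆ Set.Ioo (-1 : ℝ) 1)
    (hj_int : (∫ t : ℝ, j t) = 1) (hδ : 0 < δ) :
    (∫ t in Set.Ioi (0 : ℝ), mollK j δ t) = 1 / 2 := by
  have hK_int : Integrable (mollK j δ) :=
    ((mollK_contDiff hj).continuous).integrable_of_hasCompactSupport (mollK_hcs hj_supp hδ)
  have hsym : (∫ t in Set.Iic (0 : ℝ), mollK j δ t) = ∫ t in Set.Ioi (0 : ℝ), mollK j δ t := by
    have h := integral_comp_neg_Ioi (c := (0 : ℝ)) (f := mollK j δ)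
    simp only [neg_zero] at h
    rw [← h]
    exact setIntegral_congr_fun measurableSet_Ioi fun x _ => (mollK_even hj_even x)
  have hsplit := MeasureTheory.integral_add_compl (measurableSet_Ioi (a := (0:ℝ))) hK_int
  rw [Set.compl_Ioi] at hsplit
  rw [mollK_integral hδ hj_int, hsym] at hsplit
  linarith

lemma mollK_deriv_cont (hj : ContDiff ℝ (⊤ : ℕ∞) j) :
    Continuous (deriv (mollK j δ)) :=
  (mollK_contDiff hj (δ := δ)).continuous_deriv (by exact_mod_cast le_top)

lemma mollK_deriv_hcs (hj : ContDiff ℝ (⊤ : ℕ∞) j)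
    (hj_supp : Function.support j ⊆ Set.Ioo (-1 : ℝ) 1) (hδ : 0 < δ) :
    HasCompactSupport (deriv (mollK j δ)) :=
  (mollK_hcs hj_supp hδ).deriv

lemma integral_Iic_deriv_mollK (hj : ContDiff ℝ (⊤ : ℕ∞) j)
    (hj_supp : Function.support j ⊆ Set.Ioo (-1 : ℝ) 1) (hδ : 0 < δ) (τ c : ℝ) :
    (∫ s in Set.Iic c, deriv (mollK j δ) (τ - s)) = - mollK j δ (τ - c) := by
  set K := mollK j δ with hK
  have hKd : Differentiable ℝ K := (mollK_contDiff hj).differentiable (by simp)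
  have hderiv : ∀ s : ℝ, HasDerivAt (fun s => -K (τ - s)) (deriv K (τ - s)) s := by
    intro s
    have h1 : HasDerivAt (fun s : ℝ => τ - s) (-1) s := by
      simpa using (hasDerivAt_id s).const_sub τ
    have h2 : HasDerivAt K (deriv K (τ - s)) (τ - s) := (hKd (τ - s)).hasDerivAt
    have := (h2.comp s h1).neg
    simpa [Function.comp_def, Pi.neg_def] using this
  have hzero : ∀ x : ℝ, x ∉ Set.Ioo (-δ) δ → K x = 0 := by
    intro x hx
    by_contra h
    exact hx (mollK_support hj_supp hδ h)
  have htend : Tendsto (fun s => -K (τ - s)) atBot (𝓝 0) := by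
    apply Tendsto.congr' _ tendsto_const_nhds
    filter_upwards [Iic_mem_atBot (τ - δ)] with s hs
    rw [hzero (τ - s) (fun hmem => by simp only [Set.mem_Iic] at hs; linarith [hmem.2])]
    simp
  have hint : IntegrableOn (fun s => deriv K (τ - s)) (Set.Iic c) := by
    apply Integrable.integrableOn
    apply Continuous.integrable_of_hasCompactSupport
    · exact (mollK_deriv_cont hj).comp (continuous_const.sub continuous_id)
    · exact (mollK_deriv_hcs hj hj_supp hδ).comp_homeomorph (Homeomorph.subLeft τ)
  have := MeasureTheory.integral_Iic_of_hasDerivAt_of_tendsto'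
    (fun x _ => hderiv x) hint htend
  rw [this]; simp

lemma integral_Ioi_deriv_mollK (hj : ContDiff ℝ (⊤ : ℕ∞) j)
    (hj_supp : Function.support j ⊆ Set.Ioo (-1 : ℝ) 1) (hδ : 0 < δ) (τ c : ℝ) :
    (∫ s in Set.Ioi c, deriv (mollK j δ) (τ - s)) = mollK j δ (τ - c) := by
  set K := mollK j δ with hK
  have hKd : Differentiable ℝ K := (mollK_contDiff hj).differentiable (by simp)
  have hderiv : ∀ s : ℝ, HasDerivAt (fun s => -K (τ - s)) (deriv K (τ - s)) s := by
    intro s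
    have h1 : HasDerivAt (fun s : ℝ => τ - s) (-1) s := by
      simpa using (hasDerivAt_id s).const_sub τ
    have h2 : HasDerivAt K (deriv K (τ - s)) (τ - s) := (hKd (τ - s)).hasDerivAt
    have := (h2.comp s h1).neg
    simpa [Function.comp_def, Pi.neg_def] using this
  have hzero : ∀ x : ℝ, x ∉ Set.Ioo (-δ) δ → K x = 0 := by
    intro x hx
    by_contra h
    exact hx (mollK_support hj_supp hδ h)
  have htend : Tendsto (fun s => -K (τ - s)) atTop (𝓝 0) := by
    apply Tendsto.congr' _ tendsto_const_nhds
    filter_upwards [Ici_mem_atTop (τ + δ)] with s hs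
    rw [hzero (τ - s) (fun hmem => by simp only [Set.mem_Ici] at hs; linarith [hmem.1])]
    simp
  have hint : IntegrableOn (fun s => deriv K (τ - s)) (Set.Ioi c) := by
    apply Integrable.integrableOn
    apply Continuous.integrable_of_hasCompactSupport
    · exact (mollK_deriv_cont hj).comp (continuous_const.sub continuous_id)
    · exact (mollK_deriv_hcs hj hj_supp hδ).comp_homeomorph (Homeomorph.subLeft τ)
  have := MeasureTheory.integral_Ioi_of_hasDerivAt_of_tendsto'
    (fun x _ => hderiv x) hint htend
  rw [this]; simp

lemma mollK_nonneg (hj_nonneg : ∀ t, 0 ≤ j t) (hδ : 0 < δ) (t : ℝ) :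
    0 ≤ mollK j δ t :=
  mul_nonneg (inv_nonneg.2 hδ.le) (hj_nonneg _)

lemma mollK_mass_Ioc {T : ℝ} (hj : ContDiff ℝ (⊤ : ℕ∞) j)
    (hj_even : ∀ t, j (-t) = j t)
    (hj_supp : Function.support j ⊆ Set.Ioo (-1 : ℝ) 1)
    (hj_int : (∫ t : ℝ, j t) = 1) (hδ : 0 < δ) (hδT : δ ≤ T) :
    (∫ τ in Set.Ioc (0 : ℝ) T, mollK j δ τ) = 1 / 2 := by
  have hT : (0 : ℝ) < T := lt_of_lt_of_le hδ hδT
  have hK_int : Integrable (mollK j δ) :=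
    ((mollK_contDiff hj).continuous).integrable_of_hasCompactSupport (mollK_hcs hj_supp hδ)
  have hzero : (∫ τ in Set.Ioi T, mollK j δ τ) = 0 := by
    rw [setIntegral_congr_fun measurableSet_Ioi (g := fun _ => (0:ℝ))
      (fun x hx => by
        by_contra h
        have := mollK_support hj_supp hδ h
        have : x < δ := this.2
        simp only [Set.mem_Ioi] at hx
        linarith)]
    simp
  have hsplit : (∫ τ in Set.Ioi (0:ℝ), mollK j δ τ)
      = (∫ τ in Set.Ioc (0:ℝ) T, mollK j δ τ) + ∫ τ in Set.Ioi T, mollK j δ τ := by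
    rw [← setIntegral_union (Set.Ioc_disjoint_Ioi le_rfl) measurableSet_Ioi
      hK_int.integrableOn hK_int.integrableOn, Set.Ioc_union_Ioi_eq_Ioi hT.le]
  rw [mollK_integral_Ioi hj hj_even hj_supp hj_int hδ, hzero, add_zero] at hsplit
  linarith

lemma tendsto_boundary_left {T : ℝ} (hT : 0 < T) (hj : ContDiff ℝ (⊤ : ℕ∞) j)
    (hj_even : ∀ t, j (-t) = j t) (hj_nonneg : ∀ t, 0 ≤ j t)
    (hj_supp : Function.support j ⊆ Set.Ioo (-1 : ℝ) 1)
    (hj_int : (∫ t : ℝ, j t) = 1)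
    {g : ℝ → ℝ} (hg : Continuous g) :
    Tendsto (fun δ => ∫ τ in Set.Ioc (0 : ℝ) T, mollK j δ τ * g τ)
      (nhdsWithin 0 (Set.Ioi 0)) (nhds (g 0 / 2)) := by
  rw [Metric.tendsto_nhdsWithin_nhds]
  intro ε hε
  obtain ⟨r, hr, hgr⟩ := Metric.continuous_iff.mp hg 0 (ε / 2) (by positivity)
  refine ⟨min r T, by positivity, ?_⟩
  intro δ hδmem hdist
  have hδ0 : (0 : ℝ) < δ := hδmem
  rw [Real.dist_eq, sub_zero, abs_of_pos hδ0] at hdist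
  have hδr : δ < r := lt_of_lt_of_le hdist (min_le_left _ _)
  have hδT : δ ≤ T := le_of_lt (lt_of_lt_of_le hdist (min_le_right _ _))
  have hmass := mollK_mass_Ioc hj hj_even hj_supp hj_int hδ0 hδT
  have hK_cont : Continuous (mollK j δ) := (mollK_contDiff hj).continuous
  have hint1 : IntegrableOn (fun τ => mollK j δ τ * g τ) (Set.Ioc 0 T) :=
    (hK_cont.mul hg).integrableOn_Ioc
  have hint2 : IntegrableOn (fun τ => mollK j δ τ * g 0) (Set.Ioc 0 T) :=
    (hK_cont.mul continuous_const).integrableOn_Ioc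
  have key : (∫ τ in Set.Ioc (0:ℝ) T, mollK j δ τ * g τ) - g 0 / 2
      = ∫ τ in Set.Ioc (0:ℝ) T, mollK j δ τ * (g τ - g 0) := by
    rw [show (fun τ => mollK j δ τ * (g τ - g 0))
        = fun τ => mollK j δ τ * g τ - mollK j δ τ * g 0 by funext τ; ring]
    rw [integral_sub hint1 hint2, MeasureTheory.integral_mul_const, hmass]
    ring
  rw [Real.dist_eq]
  have habs : |(∫ τ in Set.Ioc (0:ℝ) T, mollK j δ τ * g τ) - g 0 / 2| ≤ ε / 4 := by
    rw [key]
    have hb : IntegrableOn (fun τ => mollK j δ τ * (ε / 2)) (Set.Ioc 0 T) :=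
      (hK_cont.mul continuous_const).integrableOn_Ioc
    have := MeasureTheory.norm_integral_le_of_norm_le (μ := volume.restrict (Set.Ioc 0 T))
      (f := fun τ => mollK j δ τ * (g τ - g 0)) hb ?_
    · rw [Real.norm_eq_abs] at this
      refine this.trans ?_
      rw [MeasureTheory.integral_mul_const, hmass]; linarith
    · refine (ae_restrict_iff' measurableSet_Ioc).2 (ae_of_all _ ?_)
      intro τ hτ
      rw [Real.norm_eq_abs, abs_mul, abs_of_nonneg (mollK_nonneg hj_nonneg hδ0 τ)]
      rcases lt_or_ge τ δ with h | h
      · apply mul_le_mul_of_nonneg_left _ (mollK_nonneg hj_nonneg hδ0 τ)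
        have : dist τ 0 < r := by
          rw [Real.dist_eq, sub_zero, abs_of_pos hτ.1]; linarith
        have := hgr τ this
        rw [Real.dist_eq] at this
        exact le_of_lt this
      · have : mollK j δ τ = 0 := by
          by_contra hne
          have := mollK_support hj_supp hδ0 hne
          linarith [this.2]
        rw [this]; simp
  calc |(∫ τ in Set.Ioc (0:ℝ) T, mollK j δ τ * g τ) - g 0 / 2| ≤ ε / 4 := habs
    _ < ε := by linarith

lemma tendsto_boundary_right {T : ℝ} (hT : 0 < T) (hj : ContDiff ℝ (⊤ : ℕ∞) j)
    (hj_even : ∀ t, j (-t) = j t) (hj_nonneg : ∀ t, 0 ≤ j t)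
    (hj_supp : Function.support j ⊆ Set.Ioo (-1 : ℝ) 1)
    (hj_int : (∫ t : ℝ, j t) = 1)
    {g : ℝ → ℝ} (hg : Continuous g) :
    Tendsto (fun δ => ∫ τ in Set.Ioc (0 : ℝ) T, mollK j δ (τ - T) * g τ)
      (nhdsWithin 0 (Set.Ioi 0)) (nhds (g T / 2)) := by
  have hrw : ∀ δ : ℝ, (∫ τ in Set.Ioc (0 : ℝ) T, mollK j δ (τ - T) * g τ)
      = ∫ τ in Set.Ioc (0 : ℝ) T, mollK j δ τ * g (T - τ) := by
    intro δ
    rw [← intervalIntegral.integral_of_le hT.le, ← intervalIntegral.integral_of_le hT.le]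
    have := intervalIntegral.integral_comp_sub_left (a := (0:ℝ)) (b := T)
      (fun x => mollK j δ (-x) * g (T - x)) T
    simp only [sub_self, sub_zero] at this
    calc (∫ τ in (0:ℝ)..T, mollK j δ (τ - T) * g τ)
        = ∫ τ in (0:ℝ)..T, mollK j δ (-(T - τ)) * g (T - (T - τ)) := by
          congr 1; funext τ; rw [neg_sub]; congr 2; ring
      _ = ∫ x in (0:ℝ)..T, mollK j δ (-x) * g (T - x) := this
      _ = ∫ x in (0:ℝ)..T, mollK j δ x * g (T - x) := by
          congr 1; funext x; rw [mollK_even hj_even]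
  simp only [hrw]
  have hgc : Continuous fun τ => g (T - τ) := hg.comp (continuous_const.sub continuous_id)
  have := tendsto_boundary_left hT hj hj_even hj_nonneg hj_supp hj_int hgc
  simpa using this


end kernel


section conv

variable {H : Type*} [NormedAddCommGroup H] [InnerProductSpace ℝ H] [CompleteSpace H]
variable {T : ℝ} {j : ℝ → ℝ} {δ : ℝ} {u : ℝ → H}

lemma mollT_eq_conv :
    mollT T j u δ
      = mollK j δ ⋆[ContinuousLinearMap.lsmul ℝ ℝ, volume] extendT T u := by
  funext t
  rw [MeasureTheory.convolution_eq_swap]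
  simp [mollT, ContinuousLinearMap.lsmul_apply]

lemma locallyIntegrable_extendT {M : ℝ} (hsm : StronglyMeasurable (extendT T u))
    (hbdd : ∀ t, ‖u t‖ ≤ M) : LocallyIntegrable (extendT T u) volume := by
  have hmem : MemLp (extendT T u) ⊤ volume := by
    apply memLp_top_of_bound hsm.aestronglyMeasurable M
    exact ae_of_all _ fun t => hbdd _
  exact hmem.locallyIntegrable le_top

lemma hasDerivAt_mollT (hj : ContDiff ℝ (⊤ : ℕ∞) j)
    (hj_supp : Function.support j ⊆ Set.Ioo (-1 : ℝ) 1) (hδ : 0 < δ)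
    {M : ℝ} (hsm : StronglyMeasurable (extendT T u)) (hbdd : ∀ t, ‖u t‖ ≤ M) (τ : ℝ) :
    HasDerivAt (mollT T j u δ)
      (∫ s : ℝ, deriv (mollK j δ) (τ - s) • extendT T u s) τ := by
  rw [mollT_eq_conv]
  have h := HasCompactSupport.hasDerivAt_convolution_left (ContinuousLinearMap.lsmul ℝ ℝ)
    (mollK_hcs hj_supp hδ) ((mollK_contDiff hj).of_le (by exact_mod_cast le_top))
    (locallyIntegrable_extendT hsm hbdd) τ
  convert h using 1
  rw [MeasureTheory.convolution_eq_swap]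
  simp [ContinuousLinearMap.lsmul_apply]

end conv

lemma integral_kernel_split {j : ℝ → ℝ} {δ T : ℝ}
    (hj : ContDiff ℝ (⊤ : ℕ∞) j) (hj_supp : Function.support j ⊆ Set.Ioo (-1 : ℝ) 1)
    (hδ : 0 < δ) (hT : 0 < T) {b : ℝ → ℝ} (hb : Continuous b)
    (hb0 : ∀ s : ℝ, s ≤ 0 → b s = b 0) (hbT : ∀ s : ℝ, T ≤ s → b s = b T) (τ : ℝ) :
    (∫ s : ℝ, deriv (mollK j δ) (τ - s) * b s)
      = -(mollK j δ τ) * b 0 + mollK j δ (τ - T) * b T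
        + ∫ s in Set.Ioc 0 T, deriv (mollK j δ) (τ - s) * b s := by
  set K' := deriv (mollK j δ) with hK'
  have hψc : Continuous fun s => K' (τ - s) * b s :=
    ((mollK_deriv_cont hj).comp (continuous_const.sub continuous_id)).mul hb
  have hψ_hcs : HasCompactSupport fun s => K' (τ - s) * b s := by
    have h1 : HasCompactSupport fun s => K' (τ - s) :=
      (mollK_deriv_hcs hj hj_supp hδ).comp_homeomorph (Homeomorph.subLeft τ)
    exact h1.mul_right
  have hψ_int : Integrable fun s => K' (τ - s) * b s :=
    hψc.integrable_of_hasCompactSupport hψ_hcs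
  have hsplit1 := MeasureTheory.integral_add_compl (measurableSet_Iic (a := (0:ℝ))) hψ_int
  rw [Set.compl_Iic] at hsplit1
  have hsplit2 : (∫ s in Set.Ioi (0:ℝ), K' (τ - s) * b s)
      = (∫ s in Set.Ioc (0:ℝ) T, K' (τ - s) * b s) + ∫ s in Set.Ioi T, K' (τ - s) * b s := by
    rw [← setIntegral_union (Set.Ioc_disjoint_Ioi le_rfl) measurableSet_Ioi
      hψ_int.integrableOn hψ_int.integrableOn, Set.Ioc_union_Ioi_eq_Ioi hT.le]
  have hIic : (∫ s in Set.Iic (0:ℝ), K' (τ - s) * b s) = -(mollK j δ τ) * b 0 := by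
    rw [setIntegral_congr_fun measurableSet_Iic (g := fun s => K' (τ - s) * b 0)
      (fun s hs => by rw [hb0 s hs])]
    rw [MeasureTheory.integral_mul_const, integral_Iic_deriv_mollK hj hj_supp hδ τ 0]
    ring_nf
  have hIoi : (∫ s in Set.Ioi T, K' (τ - s) * b s) = mollK j δ (τ - T) * b T := by
    rw [setIntegral_congr_fun measurableSet_Ioi (g := fun s => K' (τ - s) * b T)
      (fun s hs => by rw [hbT s (le_of_lt hs)])]
    rw [MeasureTheory.integral_mul_const, integral_Ioi_deriv_mollK hj hj_supp hδ τ T]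
  rw [hsplit2, hIic, hIoi] at hsplit1
  linarith


theorem stmt1
    {H : Type*} [NormedAddCommGroup H] [InnerProductSpace ℝ H] [CompleteSpace H]
    (T : ℝ) (hT : 0 < T)
    (j : ℝ → ℝ)
    (hj_smooth : ContDiff ℝ (⊤ : ℕ∞) j)
    (hj_even : ∀ t, j (-t) = j t)
    (hj_nonneg : ∀ t, 0 ≤ j t)
    (hj_supp : Function.support j ⊆ Set.Ioo (-1 : ℝ) 1)
    (hj_int : (∫ t : ℝ, j t) = 1)
    (hj_mono : ∀ t : ℝ, 0 ≤ t → deriv j t ≤ 0)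
    (u v : ℝ → H)
    (hu_bdd : ∃ M, ∀ t, ‖u t‖ ≤ M)
    (hv_bdd : ∃ M, ∀ t, ‖v t‖ ≤ M)
    -- weak continuity on `[0,T]` together with weak limits at the endpoints,
    -- encoded via the constant extension:
    (hu_wc : ∀ φ : H, Continuous fun t : ℝ => ⟪extendT T u t, φ⟫)
    (hv_wc : ∀ φ : H, Continuous fun t : ℝ => ⟪extendT T v t, φ⟫) :
    Tendsto
      (fun δ : ℝ =>
        ∫ τ in (0 : ℝ)..T,
          (⟪u τ, deriv (mollT T j v δ) τ⟫ + ⟪deriv (mollT T j u δ) τ, v τ⟫))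
      (nhdsWithin 0 (Set.Ioi 0))
      (nhds (⟪u T, v T⟫ - ⟪u 0, v 0⟫)) := by
  obtain ⟨Mu, hMu⟩ := hu_bdd
  obtain ⟨Mv, hMv⟩ := hv_bdd
  have hsmu : StronglyMeasurable (extendT T u) := stronglyMeasurable_of_weakCont hu_wc
  have hsmv : StronglyMeasurable (extendT T v) := stronglyMeasurable_of_weakCont hv_wc
  have hMu0 : 0 ≤ Mu := (norm_nonneg _).trans (hMu 0)
  have hMv0 : 0 ≤ Mv := (norm_nonneg _).trans (hMv 0)
  have hextu : ∀ t, ‖extendT T u t‖ ≤ Mu := fun t => hMu _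
  have hextv : ∀ t, ‖extendT T v t‖ ≤ Mv := fun t => hMv _
  have hext_u0 : extendT T u 0 = u 0 := extendT_eq_left hT.le le_rfl
  have hext_uT : extendT T u T = u T := extendT_eq_right hT.le le_rfl
  have hext_v0 : extendT T v 0 = v 0 := extendT_eq_left hT.le le_rfl
  have hext_vT : extendT T v T = v T := extendT_eq_right hT.le le_rfl
  have hg0c : Continuous fun τ => (⟪v 0, extendT T u τ⟫ + ⟪u 0, extendT T v τ⟫ : ℝ) := by
    apply Continuous.add
    · simpa [real_inner_comm] using hu_wc (v 0)
    · simpa [real_inner_comm] using hv_wc (u 0)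
  have hgTc : Continuous fun τ => (⟪v T, extendT T u τ⟫ + ⟪u T, extendT T v τ⟫ : ℝ) := by
    apply Continuous.add
    · simpa [real_inner_comm] using hu_wc (v T)
    · simpa [real_inner_comm] using hv_wc (u T)
  have hΨ : Tendsto (fun δ : ℝ =>
        (∫ τ in Set.Ioc (0:ℝ) T, mollK j δ (τ - T) * (⟪v T, extendT T u τ⟫ + ⟪u T, extendT T v τ⟫))
        - ∫ τ in Set.Ioc (0:ℝ) T, mollK j δ τ * (⟪v 0, extendT T u τ⟫ + ⟪u 0, extendT T v τ⟫))
      (nhdsWithin 0 (Set.Ioi 0)) (nhds (⟪u T, v T⟫ - ⟪u 0, v 0⟫)) := by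
    have h1 := tendsto_boundary_right hT hj_smooth hj_even hj_nonneg hj_supp hj_int hgTc
    have h2 := tendsto_boundary_left hT hj_smooth hj_even hj_nonneg hj_supp hj_int hg0c
    have h3 := h1.sub h2
    have e1 : (⟪v T, extendT T u T⟫ + ⟪u T, extendT T v T⟫) / 2 = (⟪u T, v T⟫ : ℝ) := by
      rw [hext_uT, hext_vT, real_inner_comm (v T) (u T)]; ring
    have e2 : (⟪v 0, extendT T u 0⟫ + ⟪u 0, extendT T v 0⟫) / 2 = (⟪u 0, v 0⟫ : ℝ) := by
      rw [hext_u0, hext_v0, real_inner_comm (v 0) (u 0)]; ring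
    rw [e1, e2] at h3
    exact h3
  apply Tendsto.congr' _ hΨ
  filter_upwards [self_mem_nhdsWithin] with δ hδmem
  have hδ : (0:ℝ) < δ := hδmem
  -- abbreviations (proved facts for this δ)
  have hK'cont : Continuous (deriv (mollK j δ)) := mollK_deriv_cont hj_smooth
  have hK'hcs : HasCompactSupport (deriv (mollK j δ)) := mollK_deriv_hcs hj_smooth hj_supp hδ
  obtain ⟨CK, hCK⟩ := hK'cont.bounded_above_of_compact_support hK'hcs
  have hCK0 : 0 ≤ CK := (norm_nonneg _).trans (hCK 0)
  haveI hfin : IsFiniteMeasure (volume.restrict (Set.Ioc (0:ℝ) T)) :=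
    ⟨by rw [Measure.restrict_apply_univ]; exact measure_Ioc_lt_top⟩
  -- integrability of the convolution integrand
  have hconv_int : ∀ (w : ℝ → H) (Mw : ℝ), StronglyMeasurable (extendT T w) →
      (∀ t, ‖w t‖ ≤ Mw) → ∀ τ : ℝ,
      Integrable (fun s => deriv (mollK j δ) (τ - s) • extendT T w s) volume := by
    intro w Mw hsm hbd τ
    have haesm : AEStronglyMeasurable (fun s => deriv (mollK j δ) (τ - s) • extendT T w s)
        volume :=
      ((hK'cont.comp (continuous_const.sub continuous_id)).aestronglyMeasurable).smul
        hsm.aestronglyMeasurable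
    have hg : Integrable (fun s => ‖deriv (mollK j δ) (τ - s)‖ * Mw) volume := by
      apply Continuous.integrable_of_hasCompactSupport
      · exact ((hK'cont.comp (continuous_const.sub continuous_id)).norm).mul continuous_const
      · exact (((hK'hcs.comp_homeomorph (Homeomorph.subLeft τ)).norm).mul_right)
    apply Integrable.mono' hg haesm
    apply ae_of_all
    intro s
    rw [norm_smul]
    exact mul_le_mul_of_nonneg_left (hbd _) (norm_nonneg _)
  -- pointwise identity on (0, T]
  have hpt : ∀ τ ∈ Set.Ioc (0:ℝ) T,
      (⟪u τ, deriv (mollT T j v δ) τ⟫ + ⟪deriv (mollT T j u δ) τ, v τ⟫ : ℝ)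
      = (-(mollK j δ τ) * (⟪v 0, extendT T u τ⟫ + ⟪u 0, extendT T v τ⟫)
          + mollK j δ (τ - T) * (⟪v T, extendT T u τ⟫ + ⟪u T, extendT T v τ⟫))
        + ((∫ s in Set.Ioc (0:ℝ) T, deriv (mollK j δ) (τ - s) * ⟪extendT T v s, extendT T u τ⟫)
          + ∫ s in Set.Ioc (0:ℝ) T, deriv (mollK j δ) (τ - s) * ⟪extendT T u s, extendT T v τ⟫) := by
    intro τ hτ
    have hu_eq : u τ = extendT T u τ := (extendT_eq_self hτ.1.le hτ.2).symm
    have hv_eq : v τ = extendT T v τ := (extendT_eq_self hτ.1.le hτ.2).symm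
    have hder_v : deriv (mollT T j v δ) τ
        = ∫ s : ℝ, deriv (mollK j δ) (τ - s) • extendT T v s :=
      (hasDerivAt_mollT hj_smooth hj_supp hδ hsmv hMv τ).deriv
    have hder_u : deriv (mollT T j u δ) τ
        = ∫ s : ℝ, deriv (mollK j δ) (τ - s) • extendT T u s :=
      (hasDerivAt_mollT hj_smooth hj_supp hδ hsmu hMu τ).deriv
    have e1 : (⟪u τ, deriv (mollT T j v δ) τ⟫ : ℝ)
        = ∫ s : ℝ, deriv (mollK j δ) (τ - s) * ⟪extendT T v s, extendT T u τ⟫ := by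
      rw [hder_v, hu_eq, ← integral_inner (hconv_int v Mv hsmv hMv τ)]
      congr 1
      funext s
      rw [real_inner_smul_right, real_inner_comm]
    have e2 : (⟪deriv (mollT T j u δ) τ, v τ⟫ : ℝ)
        = ∫ s : ℝ, deriv (mollK j δ) (τ - s) * ⟪extendT T u s, extendT T v τ⟫ := by
      rw [hder_u, hv_eq, real_inner_comm, ← integral_inner (hconv_int u Mu hsmu hMu τ)]
      congr 1
      funext s
      rw [real_inner_smul_right, real_inner_comm]
    have s1 := integral_kernel_split hj_smooth hj_supp hδ hT
      (b := fun s => (⟪extendT T v s, extendT T u τ⟫ : ℝ)) (hv_wc _)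
      (fun s hs => by rw [extendT_eq_left hT.le hs, extendT_eq_left hT.le le_rfl])
      (fun s hs => by rw [extendT_eq_right hT.le hs, extendT_eq_right hT.le le_rfl]) τ
    have s2 := integral_kernel_split hj_smooth hj_supp hδ hT
      (b := fun s => (⟪extendT T u s, extendT T v τ⟫ : ℝ)) (hu_wc _)
      (fun s hs => by rw [extendT_eq_left hT.le hs, extendT_eq_left hT.le le_rfl])
      (fun s hs => by rw [extendT_eq_right hT.le hs, extendT_eq_right hT.le le_rfl]) τ
    rw [e1, e2, s1, s2, hext_u0, hext_uT, hext_v0, hext_vT]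
    ring
  -- measurability and integrability of the double-integral terms
  have haesm₁ : AEStronglyMeasurable
      (Function.uncurry fun τ s : ℝ =>
        deriv (mollK j δ) (τ - s) * (⟪extendT T v s, extendT T u τ⟫ : ℝ))
      ((volume.restrict (Set.Ioc (0:ℝ) T)).prod (volume.restrict (Set.Ioc (0:ℝ) T))) := by
    show AEStronglyMeasurable
      (fun p : ℝ × ℝ => deriv (mollK j δ) (p.1 - p.2) * (⟪extendT T v p.2, extendT T u p.1⟫ : ℝ)) _
    apply AEStronglyMeasurable.mul
    · exact (hK'cont.comp (continuous_fst.sub continuous_snd)).aestronglyMeasurable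
    · exact AEStronglyMeasurable.inner
        ((hsmv.comp_measurable measurable_snd).aestronglyMeasurable)
        ((hsmu.comp_measurable measurable_fst).aestronglyMeasurable)
  have haesm₂ : AEStronglyMeasurable
      (Function.uncurry fun τ s : ℝ =>
        deriv (mollK j δ) (τ - s) * (⟪extendT T u s, extendT T v τ⟫ : ℝ))
      ((volume.restrict (Set.Ioc (0:ℝ) T)).prod (volume.restrict (Set.Ioc (0:ℝ) T))) := by
    show AEStronglyMeasurable
      (fun p : ℝ × ℝ => deriv (mollK j δ) (p.1 - p.2) * (⟪extendT T u p.2, extendT T v p.1⟫ : ℝ)) _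
    apply AEStronglyMeasurable.mul
    · exact (hK'cont.comp (continuous_fst.sub continuous_snd)).aestronglyMeasurable
    · exact AEStronglyMeasurable.inner
        ((hsmu.comp_measurable measurable_snd).aestronglyMeasurable)
        ((hsmv.comp_measurable measurable_fst).aestronglyMeasurable)
  have hbd : ∀ (x : ℝ) (a b : H), ‖a‖ ≤ Mv → ‖b‖ ≤ Mu →
      ‖deriv (mollK j δ) x * (⟪a, b⟫ : ℝ)‖ ≤ CK * (Mv * Mu) := by
    intro x a b ha hb
    rw [norm_mul]
    apply mul_le_mul (hCK x) _ (norm_nonneg _) hCK0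
    rw [Real.norm_eq_abs]
    exact (abs_real_inner_le_norm a b).trans
      (mul_le_mul ha hb (norm_nonneg _) hMv0)
  have hbd' : ∀ (x : ℝ) (a b : H), ‖a‖ ≤ Mu → ‖b‖ ≤ Mv →
      ‖deriv (mollK j δ) x * (⟪a, b⟫ : ℝ)‖ ≤ CK * (Mv * Mu) := by
    intro x a b ha hb
    rw [norm_mul]
    apply mul_le_mul (hCK x) _ (norm_nonneg _) hCK0
    rw [Real.norm_eq_abs]
    refine (abs_real_inner_le_norm a b).trans ?_
    calc ‖a‖ * ‖b‖ ≤ Mu * Mv := mul_le_mul ha hb (norm_nonneg _) hMu0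
      _ = Mv * Mu := by ring
  have hint₁ : Integrable
      (Function.uncurry fun τ s : ℝ =>
        deriv (mollK j δ) (τ - s) * (⟪extendT T v s, extendT T u τ⟫ : ℝ))
      ((volume.restrict (Set.Ioc (0:ℝ) T)).prod (volume.restrict (Set.Ioc (0:ℝ) T))) := by
    apply Integrable.mono' (integrable_const (CK * (Mv * Mu))) haesm₁
    apply ae_of_all
    intro p
    exact hbd (p.1 - p.2) _ _ (hextv _) (hextu _)
  have hint₂ : Integrable
      (Function.uncurry fun τ s : ℝ =>
        deriv (mollK j δ) (τ - s) * (⟪extendT T u s, extendT T v τ⟫ : ℝ))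
      ((volume.restrict (Set.Ioc (0:ℝ) T)).prod (volume.restrict (Set.Ioc (0:ℝ) T))) := by
    apply Integrable.mono' (integrable_const (CK * (Mv * Mu))) haesm₂
    apply ae_of_all
    intro p
    exact hbd' (p.1 - p.2) _ _ (hextu _) (hextv _)
  have hD₁aesm : AEStronglyMeasurable
      (fun τ => ∫ s in Set.Ioc (0:ℝ) T,
        deriv (mollK j δ) (τ - s) * (⟪extendT T v s, extendT T u τ⟫ : ℝ))
      (volume.restrict (Set.Ioc (0:ℝ) T)) := haesm₁.integral_prod_right'
  have hD₂aesm : AEStronglyMeasurable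
      (fun τ => ∫ s in Set.Ioc (0:ℝ) T,
        deriv (mollK j δ) (τ - s) * (⟪extendT T u s, extendT T v τ⟫ : ℝ))
      (volume.restrict (Set.Ioc (0:ℝ) T)) := haesm₂.integral_prod_right'
  have hD₁int : Integrable
      (fun τ => ∫ s in Set.Ioc (0:ℝ) T,
        deriv (mollK j δ) (τ - s) * (⟪extendT T v s, extendT T u τ⟫ : ℝ))
      (volume.restrict (Set.Ioc (0:ℝ) T)) := by
    apply Integrable.mono'
      (integrable_const (CK * (Mv * Mu) * ((volume.restrict (Set.Ioc (0:ℝ) T)) Set.univ).toReal))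
      hD₁aesm
    apply ae_of_all
    intro τ
    apply MeasureTheory.norm_integral_le_of_norm_le_const
    apply ae_of_all
    intro s
    exact hbd (τ - s) _ _ (hextv _) (hextu _)
  have hD₂int : Integrable
      (fun τ => ∫ s in Set.Ioc (0:ℝ) T,
        deriv (mollK j δ) (τ - s) * (⟪extendT T u s, extendT T v τ⟫ : ℝ))
      (volume.restrict (Set.Ioc (0:ℝ) T)) := by
    apply Integrable.mono'
      (integrable_const (CK * (Mv * Mu) * ((volume.restrict (Set.Ioc (0:ℝ) T)) Set.univ).toReal))
      hD₂aesm
    apply ae_of_all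
    intro τ
    apply MeasureTheory.norm_integral_le_of_norm_le_const
    apply ae_of_all
    intro s
    exact hbd' (τ - s) _ _ (hextu _) (hextv _)
  -- Fubini / antisymmetry cancellation
  have hswap : (∫ τ in Set.Ioc (0:ℝ) T, ∫ s in Set.Ioc (0:ℝ) T,
        deriv (mollK j δ) (τ - s) * (⟪extendT T u s, extendT T v τ⟫ : ℝ))
      = - ∫ τ in Set.Ioc (0:ℝ) T, ∫ s in Set.Ioc (0:ℝ) T,
        deriv (mollK j δ) (τ - s) * (⟪extendT T v s, extendT T u τ⟫ : ℝ) := by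
    have h := MeasureTheory.integral_integral_swap hint₂
    rw [h]
    have : (fun s => ∫ τ in Set.Ioc (0:ℝ) T,
          deriv (mollK j δ) (τ - s) * (⟪extendT T u s, extendT T v τ⟫ : ℝ))
        = fun x => - ∫ y in Set.Ioc (0:ℝ) T,
          deriv (mollK j δ) (x - y) * (⟪extendT T v y, extendT T u x⟫ : ℝ) := by
      funext x
      rw [← MeasureTheory.integral_neg]
      congr 1
      funext y
      have hodd := mollK_deriv_odd hj_smooth hj_even (x - y) (δ := δ)
      rw [show y - x = -(x - y) by ring, hodd, real_inner_comm]
      ring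
    rw [this, MeasureTheory.integral_neg]
  -- put everything together
  rw [intervalIntegral.integral_of_le hT.le,
    setIntegral_congr_fun measurableSet_Ioc (fun τ hτ => hpt τ hτ)]
  have hBneg_int : Integrable (fun τ =>
      -(mollK j δ τ) * (⟪v 0, extendT T u τ⟫ + ⟪u 0, extendT T v τ⟫ : ℝ))
      (volume.restrict (Set.Ioc (0:ℝ) T)) :=
    (((mollK_contDiff hj_smooth).continuous.neg).mul hg0c).integrableOn_Ioc
  have hBpos_int : Integrable (fun τ =>
      mollK j δ (τ - T) * (⟪v T, extendT T u τ⟫ + ⟪u T, extendT T v τ⟫ : ℝ))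
      (volume.restrict (Set.Ioc (0:ℝ) T)) :=
    (((mollK_contDiff hj_smooth).continuous.comp
      (continuous_id.sub continuous_const)).mul hgTc).integrableOn_Ioc
  have hBall : Integrable (fun τ =>
      -(mollK j δ τ) * (⟪v 0, extendT T u τ⟫ + ⟪u 0, extendT T v τ⟫ : ℝ)
      + mollK j δ (τ - T) * (⟪v T, extendT T u τ⟫ + ⟪u T, extendT T v τ⟫ : ℝ))
      (volume.restrict (Set.Ioc (0:ℝ) T)) := hBneg_int.add hBpos_int
  have hDall : Integrable (fun τ =>
      (∫ s in Set.Ioc (0:ℝ) T, deriv (mollK j δ) (τ - s) * (⟪extendT T v s, extendT T u τ⟫ : ℝ))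
      + ∫ s in Set.Ioc (0:ℝ) T, deriv (mollK j δ) (τ - s) * (⟪extendT T u s, extendT T v τ⟫ : ℝ))
      (volume.restrict (Set.Ioc (0:ℝ) T)) := hD₁int.add hD₂int
  rw [MeasureTheory.integral_add hBall hDall,
    MeasureTheory.integral_add hBneg_int hBpos_int,
    MeasureTheory.integral_add hD₁int hD₂int, hswap]
  have hneg : (fun τ => -(mollK j δ τ) * (⟪v 0, extendT T u τ⟫ + ⟪u 0, extendT T v τ⟫ : ℝ))
      = fun τ => -(mollK j δ τ * (⟪v 0, extendT T u τ⟫ + ⟪u 0, extendT T v τ⟫ : ℝ)) := by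
    funext τ; ring
  rw [hneg, MeasureTheory.integral_neg]
  ring
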